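/- Let h ∈ [0, 1) and θ_h := arcsin h ∈ [0, π/2). Then for every ρ ∈ [θ_h, π/2] one has sin ρ − h ≥ (cos(π/4 + θ_h/2)/√2)·(ρ − θ_h). -/

import Mathlib

open Real

private lemma sin_ge_div_sqrt2 (x : ℝ) (hx0 : 0 ≤ x) (hx1 : x ≤ Real.pi / 4) :
    Real.sin x ≥ x / Real.sqrt 2 := by
  rcases eq_or_lt_of_le hx0 with rfl | hx0'
  · simp
  have hx1' : x ≤ 1 := by nlinarith [Real.pi_lt_d2]
  have hcube : x - x ^ 3 / 4 < Real.sin x := by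
    have := Real.sin_gt_sub_cube hx0'; nlinarith [pow_pos hx0' 3]
  have hs : Real.sqrt 2 ^ 2 = 2 := Real.sq_sqrt (by norm_num)
  have hsnn : (0:ℝ) < Real.sqrt 2 := Real.sqrt_pos.mpr (by norm_num)
  rw [ge_iff_le, div_le_iff₀ hsnn]
  have hx79 : x ≤ 0.79 := by nlinarith [Real.pi_lt_d2]
  have hs14 : (1.41:ℝ) ≤ Real.sqrt 2 := by nlinarith [sq_nonneg (Real.sqrt 2 - 1.41)]
  have h1 : (x - x ^ 3 / 4) * Real.sqrt 2 ≤ Real.sin x * Real.sqrt 2 :=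
    mul_le_mul_of_nonneg_right hcube.le hsnn.le
  have hcn : 0 ≤ x - x ^ 3 / 4 := by
    have : (0:ℝ) ≤ 1 - x ^ 2 := by nlinarith
    nlinarith [mul_nonneg hx0 this]
  nlinarith [mul_nonneg hcn (sub_nonneg.mpr hs14),
    mul_le_mul_of_nonneg_left hx79 (mul_nonneg hx0 hx0)]

/-- for `h ∈ [0,1)`, `θ_h = arcsin h` and every `ρ ∈ [θ_h, π/2]`,
`sin ρ - h ≥ (cos(π/4 + θ_h/2)/√2) (ρ - θ_h)`. -/
theorem sin_sub_ge_linear (h : ℝ) (hh : h ∈ Set.Ico (0 : ℝ) 1) (ρ : ℝ)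
    (hρ : ρ ∈ Set.Icc (Real.arcsin h) (Real.pi / 2)) :
    Real.sin ρ - h ≥
      Real.cos (Real.pi / 4 + Real.arcsin h / 2) / Real.sqrt 2 * (ρ - Real.arcsin h) := by
  obtain ⟨hh0, hh1⟩ := hh
  obtain ⟨hρ1, hρ2⟩ := hρ
  obtain ⟨θ, hθdef⟩ : ∃ t, Real.arcsin h = t := ⟨_, rfl⟩
  rw [hθdef] at hρ1 ⊢
  have hθ0 : 0 ≤ θ := hθdef ▸ Real.arcsin_nonneg.mpr hh0
  have hθlt : θ < Real.pi / 2 := hθdef ▸ (Real.arcsin_lt_pi_div_two).mpr hh1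
  have hsinθ : Real.sin θ = h := hθdef ▸ Real.sin_arcsin (by linarith) hh1.le
  have hπ : (0:ℝ) < Real.pi := Real.pi_pos
  have hd : (0:ℝ) < Real.pi / 2 - θ := by linarith
  -- chord bound from concavity of sin on [0, π]
  obtain ⟨b, hbdef⟩ : ∃ t, (ρ - θ) / (Real.pi / 2 - θ) = t := ⟨_, rfl⟩
  have hb0 : 0 ≤ b := hbdef ▸ div_nonneg (by linarith) hd.le
  have hbm : b * (Real.pi / 2 - θ) = ρ - θ := by
    rw [← hbdef, div_mul_cancel₀ _ hd.ne']
  have ha0 : 0 ≤ 1 - b := by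
    rw [← hbdef, sub_nonneg, div_le_one hd]; linarith
  have hconc : (1 - b) • Real.sin θ + b • Real.sin (Real.pi / 2) ≤
      Real.sin ((1 - b) • θ + b • (Real.pi / 2)) :=
    strictConcaveOn_sin_Icc.concaveOn.2
      (Set.mem_Icc.mpr ⟨hθ0, by linarith⟩)
      (Set.mem_Icc.mpr ⟨by linarith, by linarith⟩)
      ha0 hb0 (by ring)
  have hcomb : (1 - b) • θ + b • (Real.pi / 2) = ρ := by
    simp only [smul_eq_mul]; nlinarith [hbm]
  rw [hcomb] at hconc
  simp only [smul_eq_mul, Real.sin_pi_div_two, hsinθ, mul_one] at hconc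
  have hchord : Real.sin ρ - h ≥ b * (1 - h) := by nlinarith
  -- key inequality
  obtain ⟨φ, hφdef⟩ : ∃ t, Real.pi / 4 - θ / 2 = t := ⟨_, rfl⟩
  have hφ0 : 0 ≤ φ := by rw [← hφdef]; linarith
  have hφ1 : φ ≤ Real.pi / 4 := by rw [← hφdef]; linarith
  have hcosX : Real.cos (Real.pi / 4 + θ / 2) = Real.sin φ := by
    rw [← hφdef, ← Real.sin_pi_div_two_sub]; ring_nf
  have hsinφ0 : 0 ≤ Real.sin φ := Real.sin_nonneg_of_nonneg_of_le_pi hφ0 (by linarith)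
  have hsinφ : Real.sin φ ≥ φ / Real.sqrt 2 := sin_ge_div_sqrt2 φ hφ0 hφ1
  have hs : Real.sqrt 2 ^ 2 = 2 := Real.sq_sqrt (by norm_num)
  have hsnn : (0:ℝ) < Real.sqrt 2 := Real.sqrt_pos.mpr (by norm_num)
  have hφs : φ ≤ Real.sin φ * Real.sqrt 2 := by
    rw [ge_iff_le, div_le_iff₀ hsnn] at hsinφ; exact hsinφ
  have h2φ : Real.cos (2 * φ) = h := by
    rw [← hφdef]
    have : 2 * (Real.pi / 4 - θ / 2) = Real.pi / 2 - θ := by ring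
    rw [this, Real.cos_pi_div_two_sub, hsinθ]
  have h1h : 1 - h = 2 * Real.sin φ ^ 2 := by
    have h2 := Real.cos_two_mul φ
    have hpy := Real.sin_sq_add_cos_sq φ
    rw [h2φ] at h2; nlinarith
  have hkey : Real.cos (Real.pi / 4 + θ / 2) * (Real.pi / 2 - θ) ≤ Real.sqrt 2 * (1 - h) := by
    rw [hcosX, h1h]
    have hd2 : Real.pi / 2 - θ = 2 * φ := by rw [← hφdef]; ring
    rw [hd2]
    nlinarith [mul_le_mul_of_nonneg_left hφs hsinφ0]
  have hc1 : Real.cos (Real.pi / 4 + θ / 2) / Real.sqrt 2 * (Real.pi / 2 - θ) ≤ 1 - h := by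
    rw [div_mul_eq_mul_div, div_le_iff₀ hsnn]
    linarith [hkey]
  calc Real.cos (Real.pi / 4 + θ / 2) / Real.sqrt 2 * (ρ - θ)
      = b * (Real.cos (Real.pi / 4 + θ / 2) / Real.sqrt 2 * (Real.pi / 2 - θ)) := by
        rw [← hbm]; ring
    _ ≤ b * (1 - h) := mul_le_mul_of_nonneg_left hc1 hb0
    _ ≤ Real.sin ρ - h := hchord
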